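/- For any tripartite density operator ρ_ABC on H_A ⊗ H_B ⊗ H_C, the l1 norm of IQ coherence satisfies C^{AB|C}_{l1}(ρ_ABC) ≥ C^{A|BC}_{l1}(ρ_ABC) + C^{B|C}_{l1}(ρ_BC), where ρ_BC = Tr_A ρ_ABC. -/

import Mathlib

open scoped BigOperators ComplexOrder Kronecker

/-- The positive semidefinite square root of a positive semidefinite matrix
(removed from Mathlib; restored with its former definition). -/
noncomputable def Matrix.PosSemidef.sqrt {n 𝕜 : Type*} [Fintype n] [DecidableEq n] [RCLike 𝕜]
    {A : Matrix n n 𝕜} (hA : A.PosSemidef) : Matrix n n 𝕜 :=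
  hA.1.eigenvectorUnitary.1 * Matrix.diagonal ((↑) ∘ (√·) ∘ hA.1.eigenvalues) *
  (star hA.1.eigenvectorUnitary : Matrix n n 𝕜)

/-- Trace norm: `‖P‖_tr = Tr √(Pᴴ P)`. -/
noncomputable def traceNorm {n : Type*} [Fintype n] [DecidableEq n] (P : Matrix n n ℂ) : ℝ :=
  ((Matrix.posSemidef_conjTranspose_mul_self P).sqrt.trace).re

/-- The blocks of an operator on H_X ⊗ H_Y with respect to a basis of X. -/
def blockB {X Y : Type*} (Q : Matrix (X × Y) (X × Y) ℂ) (i j : X) : Matrix Y Y ℂ :=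
  fun b b' => Q (i, b) (j, b')

/-- l1 norm of IQ coherence C^{X|Y}_{l1}(ρ) = Σ_{i≠j} ‖ρ^Y_{ij}‖_tr. -/
noncomputable def CIQl1 {X Y : Type*} [Fintype X] [Fintype Y] [DecidableEq X] [DecidableEq Y]
    (ρ : Matrix (X × Y) (X × Y) ℂ) : ℝ :=
  ∑ i, ∑ j, if i = j then 0 else traceNorm (blockB ρ i j)

section SqrtAux

open scoped MatrixOrder

lemma Matrix.PosSemidef.sqrt_eq_cfc_aux {n 𝕜 : Type*} [Fintype n] [DecidableEq n] [RCLike 𝕜]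
    {A : Matrix n n 𝕜} (hA : A.PosSemidef) : hA.sqrt = cfc Real.sqrt A := by
  rw [hA.1.cfc_eq, Matrix.IsHermitian.cfc, Unitary.conjStarAlgAut_apply]; rfl

lemma Matrix.PosSemidef.sqrt_eq_CFC_aux {n 𝕜 : Type*} [Fintype n] [DecidableEq n] [RCLike 𝕜]
    {A : Matrix n n 𝕜} (hA : A.PosSemidef) : hA.sqrt = CFC.sqrt A := by
  rw [hA.sqrt_eq_cfc_aux, CFC.sqrt_eq_cfc, cfc_nnreal_eq_real _ A hA.nonneg]
  congr 1; funext x; rw [Real.sqrt]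

lemma Matrix.PosSemidef.posSemidef_sqrt {n 𝕜 : Type*} [Fintype n] [DecidableEq n] [RCLike 𝕜]
    {A : Matrix n n 𝕜} (hA : A.PosSemidef) : hA.sqrt.PosSemidef := by
  rw [hA.sqrt_eq_CFC_aux]; exact Matrix.nonneg_iff_posSemidef.mp (CFC.sqrt_nonneg A)

lemma Matrix.PosSemidef.sqrt_mul_self {n 𝕜 : Type*} [Fintype n] [DecidableEq n] [RCLike 𝕜]
    {A : Matrix n n 𝕜} (hA : A.PosSemidef) : hA.sqrt * hA.sqrt = A := by
  rw [hA.sqrt_eq_CFC_aux]; exact CFC.sqrt_mul_sqrt_self A hA.nonneg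

lemma Matrix.PosSemidef.eq_sqrt_of_sq_eq {n 𝕜 : Type*} [Fintype n] [DecidableEq n] [RCLike 𝕜]
    {B : Matrix n n 𝕜} (hB : B.PosSemidef) (A : Matrix n n 𝕜) (hAB : B ^ 2 = A)
    {hA : A.PosSemidef} : B = hA.sqrt := by
  rw [hA.sqrt_eq_CFC_aux, eq_comm, CFC.sqrt_eq_iff A B hA.nonneg hB.nonneg, ← sq, hAB]

end SqrtAux

section Aux

open Matrix
open scoped ComplexInnerProductSpace

variable {n : Type*} [Fintype n] [DecidableEq n]

lemma traceNorm_eq_sum (X : Matrix n n ℂ) :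
    traceNorm X
      = ∑ k, Real.sqrt ((Matrix.posSemidef_conjTranspose_mul_self X).1.eigenvalues k) := by
  set h := Matrix.posSemidef_conjTranspose_mul_self X
  rw [traceNorm, Matrix.PosSemidef.sqrt, Matrix.trace_mul_cycle]
  rw [show ((star h.1.eigenvectorUnitary : Matrix n n ℂ) * h.1.eigenvectorUnitary.1 : Matrix n n ℂ)
        = 1 from Matrix.mem_unitaryGroup_iff'.mp h.1.eigenvectorUnitary.2]
  rw [Matrix.one_mul, Matrix.trace_diagonal, Complex.re_sum]
  simp

/-- Duality upper bound: `Re Tr (A X) ≤ ‖X‖_tr` whenever `1 - A Aᴴ ⪰ 0`. -/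
lemma re_trace_mul_le (A X : Matrix n n ℂ) (hA : (1 - A * Aᴴ).PosSemidef) :
    (Matrix.trace (A * X)).re ≤ traceNorm X := by
  classical
  set h := Matrix.posSemidef_conjTranspose_mul_self X
  set V : Matrix n n ℂ := (h.1.eigenvectorUnitary : Matrix n n ℂ)
  have hUnit : V * star V = 1 := Matrix.mem_unitaryGroup_iff.mp h.1.eigenvectorUnitary.2
  -- columns of V, as plain vectors
  set v : n → (n → ℂ) := fun k => ⇑(h.1.eigenvectorBasis k) with hv
  have hcol : ∀ k i, V i k = v k i := fun k i => h.1.eigenvectorUnitary_apply i k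
  -- trace as a sum over columns
  have htr : Matrix.trace (A * X) = ∑ k, dotProduct (star (v k)) ((A * X) *ᵥ (v k)) := by
    have h0 : Matrix.trace (A * X) = Matrix.trace (star V * (A * X) * V) := by
      rw [Matrix.trace_mul_cycle, ← Matrix.mul_assoc, hUnit, Matrix.one_mul]
    rw [h0, Matrix.trace]
    refine Finset.sum_congr rfl fun k _ => ?_
    generalize A * X = M
    simp only [Matrix.diag_apply, Matrix.mul_apply, dotProduct, Matrix.mulVec,
      Matrix.star_apply, Pi.star_apply, Finset.sum_mul, Finset.mul_sum]
    rw [Finset.sum_comm]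
    refine Finset.sum_congr rfl fun i _ => Finset.sum_congr rfl fun j _ => ?_
    rw [hcol, hcol]
    ring
  rw [htr, Complex.re_sum, traceNorm_eq_sum]
  refine Finset.sum_le_sum fun k _ => ?_
  -- per-column estimate
  set u : n → ℂ := v k with hu
  have hXXu : (Xᴴ * X) *ᵥ u = ((h.1.eigenvalues k : ℝ) : ℂ) • u := by
    have h6 := h.1.mulVec_eigenvectorBasis k
    rw [show u = ⇑(h.1.eigenvectorBasis k) from rfl, h6,
      RCLike.real_smul_eq_coe_smul (K := ℂ)]
    rfl
  have huu : dotProduct (star u) u = 1 := by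
    have h1 : (inner (𝕜 := ℂ) (h.1.eigenvectorBasis k) (h.1.eigenvectorBasis k)) = (1 : ℂ) := by
      rw [inner_self_eq_norm_sq_to_K, (h.1.eigenvectorBasis).orthonormal.1 k]
      norm_num
    rw [← h1, EuclideanSpace.inner_eq_star_dotProduct, dotProduct_comm]
  -- rewrite the quadratic form
  have key : dotProduct (star u) ((A * X) *ᵥ u)
      = dotProduct (star (Aᴴ *ᵥ u)) (X *ᵥ u) := by
    rw [Matrix.star_mulVec, ← Matrix.mulVec_mulVec, Matrix.dotProduct_mulVec (star u) A,
      Matrix.conjTranspose_conjTranspose]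
  rw [key]
  -- interpret via EuclideanSpace
  set a : EuclideanSpace ℂ n := (WithLp.equiv 2 _).symm (Aᴴ *ᵥ u)
  set b : EuclideanSpace ℂ n := (WithLp.equiv 2 _).symm (X *ᵥ u)
  have hab : dotProduct (star (Aᴴ *ᵥ u)) (X *ᵥ u) = inner (𝕜 := ℂ) a b :=
    ((EuclideanSpace.inner_toLp_toLp _ _).trans (dotProduct_comm _ _)).symm
  have hb2 : ‖b‖ ^ 2 = h.1.eigenvalues k := by
    have hbb : (inner (𝕜 := ℂ) b b).re = h.1.eigenvalues k := by
      rw [show inner (𝕜 := ℂ) b b = dotProduct (star (X *ᵥ u)) (X *ᵥ u) from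
        (EuclideanSpace.inner_toLp_toLp _ _).trans (dotProduct_comm _ _)]
      have h7 : dotProduct (star (X *ᵥ u)) (X *ᵥ u)
          = dotProduct (star u) ((Xᴴ * X) *ᵥ u) := by
        rw [Matrix.star_mulVec, ← Matrix.mulVec_mulVec, Matrix.dotProduct_mulVec (star u) Xᴴ]
      rw [h7, hXXu, dotProduct_smul, huu]
      simp
    rw [inner_self_eq_norm_sq_to_K (𝕜 := ℂ) b] at hbb
    simpa [← Complex.ofReal_pow] using hbb
  have hb : ‖b‖ = Real.sqrt (h.1.eigenvalues k) := by
    rw [← hb2, Real.sqrt_sq (norm_nonneg b)]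
  have ha : ‖a‖ ≤ 1 := by
    have haa : (inner (𝕜 := ℂ) a a).re ≤ 1 := by
      rw [show inner (𝕜 := ℂ) a a = dotProduct (star (Aᴴ *ᵥ u)) (Aᴴ *ᵥ u) from
        (EuclideanSpace.inner_toLp_toLp _ _).trans (dotProduct_comm _ _)]
      have h2 : dotProduct (star (Aᴴ *ᵥ u)) (Aᴴ *ᵥ u)
          = dotProduct (star u) ((A * Aᴴ) *ᵥ u) := by
        rw [Matrix.star_mulVec, ← Matrix.mulVec_mulVec, Matrix.dotProduct_mulVec (star u) A,
          Matrix.conjTranspose_conjTranspose]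
      have h3 := hA.dotProduct_mulVec_nonneg u
      have h4 : (dotProduct (star u) ((1 - A * Aᴴ) *ᵥ u)).re
          = 1 - (dotProduct (star u) ((A * Aᴴ) *ᵥ u)).re := by
        rw [Matrix.sub_mulVec, dotProduct_sub, Matrix.one_mulVec, huu]
        simp
      have h5 : (0 : ℝ) ≤ (dotProduct (star u) ((1 - A * Aᴴ) *ᵥ u)).re := by
        have := (Complex.le_def.mp h3).1
        simpa using this
      rw [h2]
      linarith [h4 ▸ h5]
    have h8 : (inner (𝕜 := ℂ) a a).re = ‖a‖ ^ 2 := by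
      rw [inner_self_eq_norm_sq_to_K (𝕜 := ℂ) a]
      simp [← Complex.ofReal_pow]
    rw [h8] at haa
    nlinarith [norm_nonneg a]
  have hcs : (inner (𝕜 := ℂ) a b).re ≤ ‖a‖ * ‖b‖ := by
    have := re_inner_le_norm (𝕜 := ℂ) a b
    simpa using this
  rw [hab]
  calc (inner (𝕜 := ℂ) a b).re ≤ ‖a‖ * ‖b‖ := hcs
    _ ≤ 1 * Real.sqrt (h.1.eigenvalues k) := by
        rw [hb]; exact mul_le_mul_of_nonneg_right ha (Real.sqrt_nonneg _)
    _ = Real.sqrt (h.1.eigenvalues k) := one_mul _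

/-- Duality attainment: there is a contraction `A` with `Re Tr (A X) = ‖X‖_tr`. -/
lemma exists_dual (X : Matrix n n ℂ) :
    ∃ A : Matrix n n ℂ, (1 - A * Aᴴ).PosSemidef ∧ (Matrix.trace (A * X)).re = traceNorm X := by
  classical
  set h := Matrix.posSemidef_conjTranspose_mul_self X
  set V : Matrix n n ℂ := (h.1.eigenvectorUnitary : Matrix n n ℂ)
  set lam : n → ℝ := h.1.eigenvalues with hlamdef
  have hUnit : V * Vᴴ = 1 := by
    rw [← Matrix.star_eq_conjTranspose]
    exact Matrix.mem_unitaryGroup_iff.mp h.1.eigenvectorUnitary.2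
  have hUnit' : Vᴴ * V = 1 := by
    rw [← Matrix.star_eq_conjTranspose]
    exact Matrix.mem_unitaryGroup_iff'.mp h.1.eigenvectorUnitary.2
  have hspec : Xᴴ * X = V * Matrix.diagonal (RCLike.ofReal ∘ lam) * Vᴴ := by
    rw [← Matrix.star_eq_conjTranspose]
    exact h.1.spectral_theorem
  set c : n → ℂ := fun k => if lam k = 0 then 0 else (((Real.sqrt (lam k))⁻¹ : ℝ) : ℂ) with hc
  refine ⟨V * Matrix.diagonal c * Vᴴ * Xᴴ, ?_, ?_⟩
  · -- 1 - A Aᴴ is psd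
    have hAAH : (V * Matrix.diagonal c * Vᴴ * Xᴴ) * (V * Matrix.diagonal c * Vᴴ * Xᴴ)ᴴ
        = V * Matrix.diagonal (fun k => c k * (lam k : ℂ) * star (c k)) * Vᴴ := by
      have hconj : (V * Matrix.diagonal c * Vᴴ * Xᴴ)ᴴ = X * (V * Matrix.diagonal (star c) * Vᴴ) := by
        simp only [Matrix.conjTranspose_mul, Matrix.conjTranspose_conjTranspose,
          Matrix.diagonal_conjTranspose]
        simp [Matrix.mul_assoc, Pi.star_def]
      rw [hconj]
      calc (V * Matrix.diagonal c * Vᴴ * Xᴴ) * (X * (V * Matrix.diagonal (star c) * Vᴴ))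
          = V * Matrix.diagonal c * Vᴴ * (Xᴴ * X) * (V * Matrix.diagonal (star c) * Vᴴ) := by
            simp only [Matrix.mul_assoc]
        _ = V * (Matrix.diagonal c * Matrix.diagonal (RCLike.ofReal ∘ lam)
              * Matrix.diagonal (star c)) * Vᴴ := by
            rw [hspec]
            simp only [Matrix.mul_assoc]
            rw [show Vᴴ * (V * (Matrix.diagonal (RCLike.ofReal ∘ lam) * (Vᴴ
                  * (V * (Matrix.diagonal (star c) * Vᴴ)))))
                = (Vᴴ * V) * (Matrix.diagonal (RCLike.ofReal ∘ lam) * ((Vᴴ * V)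
                  * (Matrix.diagonal (star c) * Vᴴ))) by simp only [Matrix.mul_assoc]]
            rw [hUnit', Matrix.one_mul, Matrix.one_mul]
        _ = V * Matrix.diagonal (fun k => c k * (lam k : ℂ) * star (c k)) * Vᴴ := by
            rw [Matrix.diagonal_mul_diagonal, Matrix.diagonal_mul_diagonal]
            rfl
    rw [hAAH]
    have hone : (1 : Matrix n n ℂ) = V * Matrix.diagonal (fun _ => (1 : ℂ)) * Vᴴ := by
      rw [Matrix.diagonal_one, Matrix.mul_one, hUnit]
    rw [hone, ← Matrix.sub_mul, ← Matrix.mul_sub, Matrix.diagonal_sub]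
    apply Matrix.PosSemidef.mul_mul_conjTranspose_same
    rw [Matrix.posSemidef_diagonal_iff]
    intro k
    by_cases hk : lam k = 0
    · simp [hc, hk]
    · have hlk : 0 < lam k := lt_of_le_of_ne (h.eigenvalues_nonneg k) (Ne.symm hk)
      have : c k * (lam k : ℂ) * star (c k) = 1 := by
        simp only [hc, if_neg hk, RCLike.star_def, Complex.conj_ofReal]
        rw [show (((Real.sqrt (lam k))⁻¹ : ℝ) : ℂ) * (lam k : ℂ) * (((Real.sqrt (lam k))⁻¹ : ℝ) : ℂ)
            = (((Real.sqrt (lam k))⁻¹ * (Real.sqrt (lam k))⁻¹ * lam k : ℝ) : ℂ) by push_cast; ring]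
        rw [show ((Real.sqrt (lam k))⁻¹ * (Real.sqrt (lam k))⁻¹ * lam k) = 1 by
          rw [← mul_inv, Real.mul_self_sqrt hlk.le, inv_mul_cancel₀ hlk.ne']]
        simp
      rw [this]
      simp
  · -- the trace attains the trace norm
    have hAX : (V * Matrix.diagonal c * Vᴴ * Xᴴ) * X
        = V * (Matrix.diagonal c * Matrix.diagonal (RCLike.ofReal ∘ lam)) * Vᴴ := by
      calc (V * Matrix.diagonal c * Vᴴ * Xᴴ) * X = V * Matrix.diagonal c * Vᴴ * (Xᴴ * X) := by
            simp only [Matrix.mul_assoc]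
        _ = V * (Matrix.diagonal c * Matrix.diagonal (RCLike.ofReal ∘ lam)) * Vᴴ := by
            rw [hspec]
            simp only [Matrix.mul_assoc]
            rw [show Vᴴ * (V * (Matrix.diagonal (RCLike.ofReal ∘ lam) * Vᴴ))
                = (Vᴴ * V) * (Matrix.diagonal (RCLike.ofReal ∘ lam) * Vᴴ) by
              simp only [Matrix.mul_assoc]]
            rw [hUnit', Matrix.one_mul]
    rw [hAX, Matrix.trace_mul_cycle, ← Matrix.mul_assoc]
    rw [show Vᴴ * V = 1 from hUnit', Matrix.one_mul, Matrix.diagonal_mul_diagonal,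
      Matrix.trace_diagonal, traceNorm_eq_sum, Complex.re_sum]
    refine Finset.sum_congr rfl fun k _ => ?_
    have hEk : (Matrix.posSemidef_conjTranspose_mul_self X).1.eigenvalues k = lam k := rfl
    rw [hEk]
    by_cases hk : lam k = 0
    · simp [hc, hk, Real.sqrt_zero]
    · have hlk : 0 < lam k := lt_of_le_of_ne (h.eigenvalues_nonneg k) (Ne.symm hk)
      have hs : Real.sqrt (lam k) ≠ 0 := by positivity
      simp only [hc, if_neg hk, Function.comp_apply]
      rw [show (((Real.sqrt (lam k))⁻¹ : ℝ) : ℂ) * RCLike.ofReal (lam k)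
          = (((Real.sqrt (lam k))⁻¹ * lam k : ℝ) : ℂ) by push_cast; rfl]
      rw [Complex.ofReal_re]
      rw [inv_mul_eq_iff_eq_mul₀ hs, Real.mul_self_sqrt hlk.le]

lemma traceNorm_add_le (X Y : Matrix n n ℂ) :
    traceNorm (X + Y) ≤ traceNorm X + traceNorm Y := by
  obtain ⟨A, hA, hEq⟩ := exists_dual (X + Y)
  calc traceNorm (X + Y) = (Matrix.trace (A * (X + Y))).re := hEq.symm
    _ = (Matrix.trace (A * X)).re + (Matrix.trace (A * Y)).re := by
        rw [Matrix.mul_add, Matrix.trace_add]; simp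
    _ ≤ traceNorm X + traceNorm Y :=
        add_le_add (re_trace_mul_le A X hA) (re_trace_mul_le A Y hA)

lemma traceNorm_zero : traceNorm (0 : Matrix n n ℂ) = 0 := by
  have h0 : (0 : Matrix n n ℂ)
      = (Matrix.posSemidef_conjTranspose_mul_self (0 : Matrix n n ℂ)).sqrt :=
    Matrix.PosSemidef.eq_sqrt_of_sq_eq Matrix.PosSemidef.zero _ (by simp)
  rw [traceNorm, ← h0]
  simp

lemma traceNorm_sum_le {ι : Type*} (s : Finset ι) (f : ι → Matrix n n ℂ) :
    traceNorm (∑ i ∈ s, f i) ≤ ∑ i ∈ s, traceNorm (f i) := by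
  classical
  induction s using Finset.induction_on with
  | empty => simp [traceNorm_zero]
  | insert a s hx ih =>
    rw [Finset.sum_insert hx, Finset.sum_insert hx]
    exact le_trans (traceNorm_add_le _ _) (by linarith)

end Aux

section Emb

open Matrix

variable {B C : Type*} [Fintype B] [Fintype C] [DecidableEq B] [DecidableEq C]

/-- The embedding of a `C × C` matrix as the `(m,n)` block of a `(B × C) × (B × C)` matrix. -/
def embM (m n : B) (Q : Matrix C C ℂ) : Matrix (B × C) (B × C) ℂ :=
  fun p q => if p.1 = m ∧ q.1 = n then Q p.2 q.2 else 0

lemma conjTranspose_embM (m n : B) (Q : Matrix C C ℂ) :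
    (embM m n Q)ᴴ = embM n m Qᴴ := by
  ext ⟨a, c⟩ ⟨b, c'⟩
  simp only [embM, Matrix.conjTranspose_apply]
  by_cases h1 : a = n <;> by_cases h2 : b = m <;> simp [h1, h2]

lemma embM_mul (m k n : B) (Q R : Matrix C C ℂ) :
    embM m k Q * embM k n R = embM m n (Q * R) := by
  ext ⟨a, c⟩ ⟨b, c'⟩
  simp only [embM, Matrix.mul_apply, Fintype.sum_prod_type]
  rw [Finset.sum_eq_single k]
  · by_cases ham : a = m <;> by_cases hbn : b = n <;> simp [ham, hbn]
  · intro x _ hx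
    simp [hx]
  · simp

lemma embM_posSemidef (k : B) {P : Matrix C C ℂ} (hP : P.PosSemidef) :
    (embM k k P).PosSemidef := by
  refine Matrix.PosSemidef.of_dotProduct_mulVec_nonneg ?_ ?_
  · show (embM k k P)ᴴ = embM k k P
    rw [conjTranspose_embM, hP.1]
  · intro x
    have hmv : ∀ p : B × C, (embM k k P *ᵥ x) p
        = if p.1 = k then (P *ᵥ fun c => x (k, c)) p.2 else 0 := by
      rintro ⟨a, c⟩
      simp only [Matrix.mulVec, dotProduct, embM, Fintype.sum_prod_type]
      by_cases ha : a = k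
      · subst ha
        rw [Finset.sum_eq_single a]
        · simp [Matrix.mulVec, dotProduct]
        · intro x' _ hx'; simp [hx']
        · simp
      · simp [ha]
    have : dotProduct (star x) (embM k k P *ᵥ x)
        = dotProduct (star fun c => x (k, c)) (P *ᵥ fun c => x (k, c)) := by
      simp only [dotProduct, Fintype.sum_prod_type, Pi.star_apply]
      rw [Finset.sum_eq_single k]
      · refine Finset.sum_congr rfl fun c _ => ?_
        rw [hmv (k, c)]
        simp
      · intro x' _ hx'
        refine Finset.sum_eq_zero fun c _ => ?_
        rw [hmv (x', c)]
        simp [hx']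
      · simp
    rw [this]
    exact hP.dotProduct_mulVec_nonneg _

lemma trace_embM (k : B) (S : Matrix C C ℂ) : (embM k k S).trace = S.trace := by
  simp only [Matrix.trace, Matrix.diag_apply, Fintype.sum_prod_type, embM]
  rw [Finset.sum_eq_single k]
  · simp
  · intro x _ hx; simp [hx]
  · simp

lemma traceNorm_embM (m n : B) (Q : Matrix C C ℂ) :
    traceNorm (embM m n Q) = traceNorm Q := by
  have hQ := Matrix.posSemidef_conjTranspose_mul_self Q
  have h2 : embM n n hQ.sqrt = (Matrix.posSemidef_conjTranspose_mul_self (embM m n Q)).sqrt := by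
    apply Matrix.PosSemidef.eq_sqrt_of_sq_eq (embM_posSemidef n hQ.posSemidef_sqrt)
    rw [pow_two, embM_mul, Matrix.PosSemidef.sqrt_mul_self, conjTranspose_embM, embM_mul]
  rw [traceNorm, ← h2, trace_embM, traceNorm]

end Emb

/-- for a tripartite state (indexed by (A × B) × C, so the AB|C blocks are the
generic ones), C^{AB|C}_{l1}(ρ_ABC) ≥ C^{A|BC}_{l1}(ρ_ABC) + C^{B|C}_{l1}(ρ_BC),
where ρ_BC = Tr_A ρ_ABC and C^{A|BC} uses the blocks of ρ_ABC over the A-basis. -/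
theorem CIQl1_tripartite {A B C : Type*} [Fintype A] [Fintype B] [Fintype C]
    [DecidableEq A] [DecidableEq B] [DecidableEq C]
    (ρ : Matrix ((A × B) × C) ((A × B) × C) ℂ) (hρ : ρ.PosSemidef) (hTr : ρ.trace = 1) :
    CIQl1 ρ ≥
      (∑ i : A, ∑ j : A, if i = j then 0 else
        traceNorm ((Matrix.of fun mc nc =>
          ρ ((i, mc.1), mc.2) ((j, nc.1), nc.2)) : Matrix (B × C) (B × C) ℂ)) +
      CIQl1 ((Matrix.of fun mc nc =>
        ∑ i : A, ρ ((i, mc.1), mc.2) ((i, nc.1), nc.2)) : Matrix (B × C) (B × C) ℂ) := by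
  classical
  set t : A → B → A → B → ℝ := fun i m j n => traceNorm (blockB ρ (i, m) (j, n)) with ht
  -- LHS splits into two sums
  have hsplit : CIQl1 ρ
      = (∑ i, ∑ j, if i = j then 0 else ∑ m, ∑ n, t i m j n)
        + ∑ i, ∑ m, ∑ n, if m = n then 0 else t i m i n := by
    rw [CIQl1, Fintype.sum_prod_type]
    have : ∀ i : A, ∑ m : B, ∑ q : A × B,
          (if (i, m) = q then 0 else traceNorm (blockB ρ (i, m) q))
        = ∑ m : B, ∑ j : A, ∑ n : B,
          ((if i = j then 0 else t i m j n) + (if i = j then (if m = n then 0 else t i m j n) else 0)) := by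
      intro i
      refine Finset.sum_congr rfl fun m _ => ?_
      rw [Fintype.sum_prod_type]
      refine Finset.sum_congr rfl fun j _ => Finset.sum_congr rfl fun n _ => ?_
      by_cases hij : i = j
      · subst hij
        by_cases hmn : m = n
        · subst hmn; simp
        · simp [hmn, Prod.ext_iff, ht]
      · simp [hij, Prod.ext_iff, ht]
    simp_rw [this]
    rw [show ∀ (f g : A → B → A → B → ℝ), ∑ i, ∑ m, ∑ j, ∑ n, (f i m j n + g i m j n)
        = (∑ i, ∑ m, ∑ j, ∑ n, f i m j n) + ∑ i, ∑ m, ∑ j, ∑ n, g i m j n from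
      fun f g => by simp [Finset.sum_add_distrib]]
    congr 1
    · refine Finset.sum_congr rfl fun i _ => ?_
      rw [Finset.sum_comm]
      refine Finset.sum_congr rfl fun j _ => ?_
      by_cases hij : i = j <;> simp [hij]
    · refine Finset.sum_congr rfl fun i _ => Finset.sum_congr rfl fun m _ => ?_
      rw [Finset.sum_eq_single i]
      · simp
      · intro j _ hj; simp [Ne.symm hj]
      · simp
  rw [hsplit, ge_iff_le]
  apply add_le_add
  · -- A|BC part
    refine Finset.sum_le_sum fun i _ => Finset.sum_le_sum fun j _ => ?_
    by_cases hij : i = j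
    · simp [hij]
    · simp only [if_neg hij]
      have hdecomp : ((Matrix.of fun mc nc =>
            ρ ((i, mc.1), mc.2) ((j, nc.1), nc.2)) : Matrix (B × C) (B × C) ℂ)
          = ∑ m : B, ∑ n : B, embM m n (blockB ρ (i, m) (j, n)) := by
        ext ⟨a, c⟩ ⟨b, c'⟩
        simp only [Matrix.of_apply, Matrix.sum_apply, embM, blockB]
        rw [Finset.sum_eq_single a]
        · rw [Finset.sum_eq_single b]
          · simp
          · intro x _ hx; simp [Ne.symm hx]
          · simp
        · intro x _ hx
          refine Finset.sum_eq_zero fun y _ => ?_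
          simp [Ne.symm hx]
        · simp
      rw [hdecomp]
      calc traceNorm (∑ m : B, ∑ n : B, embM m n (blockB ρ (i, m) (j, n)))
          ≤ ∑ m : B, traceNorm (∑ n : B, embM m n (blockB ρ (i, m) (j, n))) :=
            traceNorm_sum_le _ _
        _ ≤ ∑ m : B, ∑ n : B, traceNorm (embM m n (blockB ρ (i, m) (j, n))) :=
            Finset.sum_le_sum fun m _ => traceNorm_sum_le _ _
        _ = ∑ m : B, ∑ n : B, t i m j n := by
            refine Finset.sum_congr rfl fun m _ => Finset.sum_congr rfl fun n _ => ?_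
            rw [traceNorm_embM]
  · -- B|C part
    have hswap : ∑ i : A, ∑ m : B, ∑ n : B, (if m = n then 0 else t i m i n)
        = ∑ m : B, ∑ n : B, if m = n then 0 else ∑ i : A, t i m i n := by
      rw [Finset.sum_comm]
      refine Finset.sum_congr rfl fun m _ => ?_
      rw [Finset.sum_comm]
      refine Finset.sum_congr rfl fun n _ => ?_
      by_cases hmn : m = n <;> simp [hmn]
    rw [CIQl1, hswap]
    refine Finset.sum_le_sum fun m _ => Finset.sum_le_sum fun n _ => ?_
    by_cases hmn : m = n
    · simp [hmn]
    · simp only [if_neg hmn]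
      have hblock : blockB ((Matrix.of fun mc nc =>
            ∑ i : A, ρ ((i, mc.1), mc.2) ((i, nc.1), nc.2)) : Matrix (B × C) (B × C) ℂ) m n
          = ∑ i : A, blockB ρ (i, m) (i, n) := by
        ext c c'
        simp [blockB, Matrix.sum_apply]
      rw [hblock]
      exact traceNorm_sum_le _ _
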